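/- Let d ≥ 1 and τ be integers with 2τ > d, let G be a d-regular triangle-free simple graph on a finite vertex set V, and let {u,v} be an edge of G. Then the number of functions c : variable V → {a,b} for which the threshold algorithm outputs A_τ(c)(u) ≠ A_τ(c)(v), divided by 2^|V|, equals 1/2 + 4^{-(d-1)} · C(d-1, τ-1) · Σ_{i = d-τ+1}^{τ-1} C(d-1, i). -/

import Mathlib

/-- Binomial coefficient with integer lower index, following the convention
`C(n,k) = 0` for `k < 0` (and `k > n`). -/
def chooseZ (n : ℕ) (k : ℤ) : ℕ := if 0 ≤ k then n.choose k.toNat else 0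

open Finset

section Counting
variable {α : Type*} [Fintype α] [DecidableEq α]


variable {α : Type*} [Fintype α] [DecidableEq α]

def extFun (S : Finset α) (f : {x // x ∈ S} → Bool) : α → Bool :=
  fun x => if h : x ∈ S then f ⟨x, h⟩ else false

def extFun' (S : Finset α) (g : {x // x ∉ S} → Bool) : α → Bool :=
  fun x => if h : x ∈ S then false else g ⟨x, h⟩

lemma core (S : Finset α) (P Q : (α → Bool) → Prop) [DecidablePred P] [DecidablePred Q]
    (hP : ∀ c₁ c₂, (∀ x ∈ S, c₁ x = c₂ x) → (P c₁ ↔ P c₂))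
    (hQ : ∀ c₁ c₂, (∀ x ∉ S, c₁ x = c₂ x) → (Q c₁ ↔ Q c₂)) :
    (univ.filter fun c : α → Bool => P c ∧ Q c).card
      = (univ.filter fun f : {x // x ∈ S} → Bool => P (extFun S f)).card *
        (univ.filter fun g : {x // x ∉ S} → Bool => Q (extFun' S g)).card := by
  classical
  rw [← Fintype.card_subtype, ← Fintype.card_subtype, ← Fintype.card_subtype, ← Fintype.card_prod]
  apply Fintype.card_congr
  refine Equiv.trans ?_ Equiv.subtypeProdEquivProd
  refine ((Equiv.piEquivPiSubtypeProd (· ∈ S) (fun _ => Bool)).subtypeEquiv ?_)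
  intro c
  set e := Equiv.piEquivPiSubtypeProd (fun x => x ∈ S) (fun _ : α => Bool)
  have h1 : P c ↔ P (extFun S (e c).1) := by
    apply hP; intro x hx; simp [extFun, e, Equiv.piEquivPiSubtypeProd, hx]
  have h2 : Q c ↔ Q (extFun' S (e c).2) := by
    apply hQ; intro x hx; simp [extFun', e, Equiv.piEquivPiSubtypeProd, hx]
  rw [← h1, ← h2]

lemma restrict_count (S : Finset α) (P : (α → Bool) → Prop) [DecidablePred P]
    (hP : ∀ c₁ c₂, (∀ x ∈ S, c₁ x = c₂ x) → (P c₁ ↔ P c₂)) :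
    (univ.filter P).card
      = (univ.filter fun f : {x // x ∈ S} → Bool => P (extFun S f)).card
        * 2 ^ (Fintype.card α - S.card) := by
  classical
  have := core S P (fun _ => True) hP (fun _ _ _ => Iff.rfl)
  simp only [and_true, filter_true] at this
  rw [this, Finset.card_univ]
  congr 1
  rw [Fintype.card_fun, Fintype.card_bool]
  congr 1
  rw [Fintype.card_subtype_compl, Fintype.card_coe]

lemma restrict_count' (S : Finset α) (Q : (α → Bool) → Prop) [DecidablePred Q]
    (hQ : ∀ c₁ c₂, (∀ x ∉ S, c₁ x = c₂ x) → (Q c₁ ↔ Q c₂)) :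
    (univ.filter Q).card
      = (univ.filter fun g : {x // x ∉ S} → Bool => Q (extFun' S g)).card
        * 2 ^ S.card := by
  classical
  have := core S (fun _ => True) Q (fun _ _ _ => Iff.rfl) hQ
  simp only [true_and, filter_true] at this
  rw [this, Finset.card_univ, Fintype.card_fun, Fintype.card_bool, Fintype.card_coe, mul_comm]

lemma indep (S₁ S₂ : Finset α) (h : Disjoint S₁ S₂)
    (P₁ P₂ : (α → Bool) → Prop) [DecidablePred P₁] [DecidablePred P₂]
    (hP₁ : ∀ c₁ c₂, (∀ x ∈ S₁, c₁ x = c₂ x) → (P₁ c₁ ↔ P₁ c₂))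
    (hP₂ : ∀ c₁ c₂, (∀ x ∈ S₂, c₁ x = c₂ x) → (P₂ c₁ ↔ P₂ c₂)) :
    (univ.filter fun c : α → Bool => P₁ c ∧ P₂ c).card * 2 ^ Fintype.card α
      = (univ.filter P₁).card * (univ.filter P₂).card := by
  classical
  have hQ : ∀ c₁ c₂ : α → Bool, (∀ x ∉ S₁, c₁ x = c₂ x) → (P₂ c₁ ↔ P₂ c₂) := by
    intro c₁ c₂ hc
    exact hP₂ c₁ c₂ (fun x hx => hc x (fun hx1 => (Finset.disjoint_left.mp h hx1) hx))
  rw [core S₁ P₁ P₂ hP₁ hQ, restrict_count S₁ P₁ hP₁, restrict_count' S₁ P₂ hQ]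
  have hle : S₁.card ≤ Fintype.card α := Finset.card_le_univ S₁
  rw [mul_mul_mul_comm, ← pow_add, Nat.sub_add_cancel hle]

lemma count_fun {β : Type*} [Fintype β] [DecidableEq β] (b : Bool) (k : ℕ) :
    (univ.filter fun f : β → Bool => (univ.filter fun z => f z = b).card = k).card
      = (Fintype.card β).choose k := by
  classical
  rw [show (Fintype.card β).choose k = (Finset.powersetCard k (univ : Finset β)).card by rw [Finset.card_powersetCard, Finset.card_univ]]
  refine Finset.card_bij' (fun f _ => univ.filter fun z => f z = b)
    (fun s _ => fun z => if z ∈ s then b else !b) ?_ ?_ ?_ ?_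
  · intro f hf
    simp only [mem_filter, mem_univ, true_and] at hf
    simp [Finset.mem_powersetCard, hf]
  · intro s hs
    simp only [Finset.mem_powersetCard] at hs
    simp only [mem_filter, mem_univ, true_and]
    rw [← hs.2]
    congr 1
    ext z
    by_cases hz : z ∈ s <;> simp [hz]
  · intro f hf
    funext z
    by_cases hz : f z = b <;> simp [hz]
    cases b <;> revert hz <;> cases f z <;> simp
  · intro s hs
    ext z
    by_cases hz : z ∈ s <;> simp [hz]

omit [Fintype α] in
lemma filter_ext_card (S : Finset α) (f : {x // x ∈ S} → Bool) (b : Bool) :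
    (S.filter fun z => extFun S f z = b).card
      = (univ.filter fun z : {x // x ∈ S} => f z = b).card := by
  classical
  apply Finset.card_bij (i := fun z hz => (⟨z, (Finset.mem_filter.mp hz).1⟩ : {x // x ∈ S}))
  · intro z hz
    have h := (Finset.mem_filter.mp hz).2
    simp only [extFun, (Finset.mem_filter.mp hz).1, dif_pos] at h
    simp [h]
  · intro z₁ h₁ z₂ h₂ h
    simpa using congrArg Subtype.val h
  · intro z hz
    refine ⟨z.val, ?_, by simp⟩
    simp only [mem_filter, mem_univ, true_and] at hz
    simp only [Finset.mem_filter]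
    exact ⟨z.prop, by rw [extFun, dif_pos z.prop]; exact hz⟩

lemma count_ball (S : Finset α) (b : Bool) (k : ℕ) :
    (univ.filter fun c : α → Bool => (S.filter fun z => c z = b).card = k).card
      = S.card.choose k * 2 ^ (Fintype.card α - S.card) := by
  classical
  have hdep : ∀ c₁ c₂ : α → Bool, (∀ x ∈ S, c₁ x = c₂ x) →
      (((S.filter fun z => c₁ z = b).card = k) ↔ ((S.filter fun z => c₂ z = b).card = k)) := by
    intro c₁ c₂ h
    rw [Finset.filter_congr (fun x hx => by rw [h x hx])]
  rw [restrict_count S _ hdep]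
  congr 1
  have : ∀ f : {x // x ∈ S} → Bool,
      ((S.filter fun z => extFun S f z = b).card = k) ↔ ((univ.filter fun z : {x // x ∈ S} => f z = b).card = k) := by
    intro f; rw [filter_ext_card]
  rw [Finset.filter_congr (fun f _ => this f), count_fun, Fintype.card_coe]

lemma count_point (w : α) (b : Bool) :
    (univ.filter fun c : α → Bool => c w = b).card = 2 ^ (Fintype.card α - 1) := by
  classical
  have h := count_ball ({w} : Finset α) b 1
  have hiff : ∀ c : α → Bool,
      ((({w} : Finset α).filter fun z => c z = b).card = 1) ↔ (c w = b) := by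
    intro c
    rw [Finset.filter_singleton]
    by_cases h : c w = b <;> simp [h]
  rw [← Finset.filter_congr (fun c _ => hiff c), h]
  simp

lemma chooseZ_reflect (m : ℕ) (i : ℤ) : chooseZ m ((m:ℤ) - i) = chooseZ m i := by
  unfold chooseZ
  by_cases h1 : 0 ≤ i
  · by_cases h2 : i ≤ (m:ℤ)
    · rw [if_pos (by omega), if_pos h1]
      have h3 : ((m:ℤ) - i).toNat = m - i.toNat := by omega
      rw [h3]
      exact Nat.choose_symm (by omega)
    · rw [if_neg (by omega), if_pos h1]
      exact (Nat.choose_eq_zero_of_lt (by omega)).symm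
  · rw [if_pos (by omega), if_neg h1]
    exact Nat.choose_eq_zero_of_lt (by omega)

lemma icc_to_range (m : ℕ) (a b : ℤ) :
    ∑ i ∈ Finset.Icc a b, (chooseZ m i : ℝ)
      = ∑ x ∈ Finset.range (m+1), (if a ≤ (x:ℤ) ∧ (x:ℤ) ≤ b then (m.choose x : ℝ) else 0) := by
  rw [← Finset.sum_filter]
  have hside : ∀ i ∈ Finset.Icc a b, (chooseZ m i : ℝ) ≠ 0 → (0 ≤ i ∧ i ≤ (m:ℤ)) := by
    intro i _ hne
    unfold chooseZ at hne
    constructor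
    · by_contra h; rw [if_neg h] at hne; simp at hne
    · by_contra h
      rw [if_pos (by omega), Nat.choose_eq_zero_of_lt (by omega)] at hne
      simp at hne
  rw [← Finset.sum_filter_of_ne hside]
  refine Finset.sum_nbij' (fun i => i.toNat) (fun x => (x:ℤ)) ?_ ?_ ?_ ?_ ?_
  · intro i hi
    simp only [Finset.mem_filter, Finset.mem_Icc, Finset.mem_range] at hi ⊢
    omega
  · intro x hx
    simp only [Finset.mem_filter, Finset.mem_range, Finset.mem_Icc] at hx ⊢
    omega
  · intro i hi; simp only [Finset.mem_filter, Finset.mem_Icc] at hi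
    simpa using Int.toNat_of_nonneg hi.2.1
  · intro x _; simp
  · intro i hi
    simp only [Finset.mem_filter, Finset.mem_Icc] at hi
    unfold chooseZ
    rw [if_pos hi.2.1]


lemma sum_if_iff (s t : Finset ℕ) (p q : ℕ → Prop) [DecidablePred p] [DecidablePred q]
    (f g : ℕ → ℝ) :
    (∑ x ∈ s, ∑ y ∈ t, (if (p x ↔ q y) then f x * g y else 0))
      = (∑ x ∈ s, if p x then f x else 0) * (∑ y ∈ t, if q y then g y else 0)
        + (∑ x ∈ s, if ¬ p x then f x else 0) * (∑ y ∈ t, if ¬ q y then g y else 0) := by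
  rw [Finset.sum_mul, Finset.sum_mul, ← Finset.sum_add_distrib]
  apply Finset.sum_congr rfl
  intro x _
  by_cases hp : p x
  · rw [if_pos hp, if_neg (by simpa using hp), zero_mul, add_zero, Finset.mul_sum]
    apply Finset.sum_congr rfl
    intro y _
    by_cases hq : q y
    · rw [if_pos (by tauto), if_pos hq]
    · rw [if_neg (by tauto), if_neg hq, mul_zero]
  · rw [if_neg hp, if_pos hp, zero_mul, zero_add, Finset.mul_sum]
    apply Finset.sum_congr rfl
    intro y _
    by_cases hq : q y
    · rw [if_neg (by tauto), if_neg (by simpa using hq), mul_zero]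
    · rw [if_pos (by tauto), if_pos hq]

lemma sum_if_xor (s t : Finset ℕ) (p q : ℕ → Prop) [DecidablePred p] [DecidablePred q]
    (f g : ℕ → ℝ) :
    (∑ x ∈ s, ∑ y ∈ t, (if ¬ (p x ↔ q y) then f x * g y else 0))
      = (∑ x ∈ s, if p x then f x else 0) * (∑ y ∈ t, if ¬ q y then g y else 0)
        + (∑ x ∈ s, if ¬ p x then f x else 0) * (∑ y ∈ t, if q y then g y else 0) := by
  rw [Finset.sum_mul, Finset.sum_mul, ← Finset.sum_add_distrib]
  apply Finset.sum_congr rfl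
  intro x _
  by_cases hp : p x
  · rw [if_pos hp, if_neg (by simpa using hp), zero_mul, add_zero, Finset.mul_sum]
    apply Finset.sum_congr rfl
    intro y _
    by_cases hq : q y
    · rw [if_neg (by tauto), if_neg (by simpa using hq), mul_zero]
    · rw [if_pos (by tauto), if_pos (by simpa using hq)]
  · rw [if_neg hp, if_pos hp, zero_mul, zero_add, Finset.mul_sum]
    apply Finset.sum_congr rfl
    intro y _
    by_cases hq : q y
    · rw [if_pos (by tauto), if_pos hq]
    · rw [if_neg (by tauto), if_neg hq, mul_zero]

lemma key (τ m : ℕ) (hτ1 : 1 ≤ τ) (hτ : m + 2 ≤ 2 * τ) :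
    ∑ i ∈ Finset.Icc ((m:ℤ)+2-τ) ((τ:ℤ)-1), (chooseZ m i : ℝ)
      = (∑ x ∈ range (m+1), if 1 + x < τ then (m.choose x:ℝ) else 0)
        + (∑ x ∈ range (m+1), if x < τ then (m.choose x:ℝ) else 0)
        - 2^m := by
  -- step 1 : reflect the interval
  have h1 : ∑ i ∈ Finset.Icc ((m:ℤ)+2-τ) ((τ:ℤ)-1), (chooseZ m i : ℝ)
      = ∑ i ∈ Finset.Icc ((m:ℤ)+1-τ) ((τ:ℤ)-2), (chooseZ m i : ℝ) := by
    refine Finset.sum_nbij' (fun i => (m:ℤ) - i) (fun i => (m:ℤ) - i) ?_ ?_ ?_ ?_ ?_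
    · intro i hi; simp only [Finset.mem_Icc] at hi ⊢; omega
    · intro i hi; simp only [Finset.mem_Icc] at hi ⊢; omega
    · intro i _; simp
    · intro i _; simp
    · intro i _; rw [chooseZ_reflect]
  rw [h1, icc_to_range]
  -- step 3 : total sum
  have htot : (∑ x ∈ range (m+1), if x < τ then (m.choose x:ℝ) else 0)
      = 2^m - ∑ x ∈ range (m+1), (if τ ≤ x then (m.choose x:ℝ) else 0) := by
    have : (∑ x ∈ range (m+1), if x < τ then (m.choose x:ℝ) else 0)
        + ∑ x ∈ range (m+1), (if τ ≤ x then (m.choose x:ℝ) else 0)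
        = ∑ x ∈ range (m+1), (m.choose x : ℝ) := by
      rw [← Finset.sum_add_distrib]
      apply Finset.sum_congr rfl
      intro x _
      by_cases h : x < τ
      · rw [if_pos h, if_neg (by omega), add_zero]
      · rw [if_neg h, if_pos (by omega), zero_add]
    have h2 : ∑ x ∈ range (m+1), (m.choose x : ℝ) = 2^m := by
      rw [← Nat.cast_sum]
      rw [Nat.sum_range_choose]
      push_cast; ring
    linarith
  rw [htot]
  -- step 4 : reflect the upper-tail sum
  have h4 : (∑ x ∈ range (m+1), if τ ≤ x then (m.choose x:ℝ) else 0)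
      = ∑ x ∈ range (m+1), (if x + τ ≤ m then (m.choose x:ℝ) else 0) := by
    rw [← Finset.sum_range_reflect (fun x => if τ ≤ x then (m.choose x:ℝ) else 0) (m+1)]
    apply Finset.sum_congr rfl
    intro x hx
    simp only [Finset.mem_range] at hx
    have hxm : x ≤ m := by omega
    simp only [Nat.add_sub_cancel]
    by_cases h : x + τ ≤ m
    · rw [if_pos (by omega), if_pos h, Nat.choose_symm hxm]
    · rw [if_neg (by omega), if_neg h]
  rw [h4]
  -- step 5 : pointwise
  have h5 : ∀ S1 S2 S3 : ℝ, S1 = S2 - S3 → S1 = S2 + (2^m - S3) - 2^m := by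
    intro S1 S2 S3 h; linarith
  apply h5
  rw [← Finset.sum_sub_distrib]
  apply Finset.sum_congr rfl
  intro x hx
  simp only [Finset.mem_range] at hx
  by_cases h : x + τ ≤ m
  · rw [if_neg (by omega), if_pos (by omega), if_pos h]; ring
  · by_cases h2 : 1 + x < τ
    · rw [if_pos (by constructor <;> [omega; omega]), if_pos h2, if_neg h, sub_zero]
    · rw [if_neg (by omega), if_neg h2, if_neg h]; ring

lemma arith (τ m : ℕ) (hτ1 : 1 ≤ τ) (hτ : m + 2 ≤ 2 * τ) :
    (∑ bu : Bool, ∑ bv : Bool, ∑ x ∈ range (m+1), ∑ y ∈ range (m+1),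
      (if (if (if bv = bu then 1 else 0) + x < τ then bu else !bu)
          ≠ (if (if bu = bv then 1 else 0) + y < τ then bv else !bv)
       then (m.choose x : ℝ) * m.choose y else 0))
    = 2 * 4^m + 4 * (chooseZ m ((τ:ℤ)-1) : ℝ)
        * ∑ i ∈ Finset.Icc ((m:ℤ)+2-τ) ((τ:ℤ)-1), (chooseZ m i : ℝ) := by
  rw [Fintype.sum_bool]
  rw [Fintype.sum_bool, Fintype.sum_bool]
  -- notation
  set C : ℕ → ℝ := fun x => (m.choose x : ℝ) with hC
  have hblock_tt : (∑ x ∈ range (m+1), ∑ y ∈ range (m+1),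
      (if (if (if true = true then 1 else 0) + x < τ then true else !true)
          ≠ (if (if true = true then 1 else 0) + y < τ then true else !true)
       then C x * C y else 0))
      = ∑ x ∈ range (m+1), ∑ y ∈ range (m+1),
        (if ¬ (1 + x < τ ↔ 1 + y < τ) then C x * C y else 0) := by
    apply Finset.sum_congr rfl; intro x _; apply Finset.sum_congr rfl; intro y _
    apply if_congr ?_ rfl rfl
    by_cases h1 : 1 + x < τ <;> by_cases h2 : 1 + y < τ <;> simp [h1, h2]
  have hblock_ff : (∑ x ∈ range (m+1), ∑ y ∈ range (m+1),
      (if (if (if false = false then 1 else 0) + x < τ then false else !false)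
          ≠ (if (if false = false then 1 else 0) + y < τ then false else !false)
       then C x * C y else 0))
      = ∑ x ∈ range (m+1), ∑ y ∈ range (m+1),
        (if ¬ (1 + x < τ ↔ 1 + y < τ) then C x * C y else 0) := by
    apply Finset.sum_congr rfl; intro x _; apply Finset.sum_congr rfl; intro y _
    apply if_congr ?_ rfl rfl
    by_cases h1 : 1 + x < τ <;> by_cases h2 : 1 + y < τ <;> simp [h1, h2]
  have hblock_tf : (∑ x ∈ range (m+1), ∑ y ∈ range (m+1),
      (if (if (if false = true then 1 else 0) + x < τ then true else !true)
          ≠ (if (if true = false then 1 else 0) + y < τ then false else !false)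
       then C x * C y else 0))
      = ∑ x ∈ range (m+1), ∑ y ∈ range (m+1),
        (if (x < τ ↔ y < τ) then C x * C y else 0) := by
    apply Finset.sum_congr rfl; intro x _; apply Finset.sum_congr rfl; intro y _
    apply if_congr ?_ rfl rfl
    by_cases h1 : x < τ <;> by_cases h2 : y < τ <;> simp [h1, h2]
  have hblock_ft : (∑ x ∈ range (m+1), ∑ y ∈ range (m+1),
      (if (if (if true = false then 1 else 0) + x < τ then false else !false)
          ≠ (if (if false = true then 1 else 0) + y < τ then true else !true)
       then C x * C y else 0))
      = ∑ x ∈ range (m+1), ∑ y ∈ range (m+1),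
        (if (x < τ ↔ y < τ) then C x * C y else 0) := by
    apply Finset.sum_congr rfl; intro x _; apply Finset.sum_congr rfl; intro y _
    apply if_congr ?_ rfl rfl
    by_cases h1 : x < τ <;> by_cases h2 : y < τ <;> simp [h1, h2]
  rw [hblock_tt, hblock_ff, hblock_tf, hblock_ft]
  rw [sum_if_xor (range (m+1)) (range (m+1)) (fun x => 1 + x < τ) (fun y => 1 + y < τ) C C]
  rw [sum_if_iff (range (m+1)) (range (m+1)) (fun x => x < τ) (fun y => y < τ) C C]
  set A : ℝ := ∑ x ∈ range (m+1), if 1 + x < τ then C x else 0 with hA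
  set A' : ℝ := ∑ x ∈ range (m+1), if x < τ then C x else 0 with hA'
  have hTot : ∑ x ∈ range (m+1), C x = 2^m := by
    rw [hC, ← Nat.cast_sum, Nat.sum_range_choose]; push_cast; ring
  have hnot1 : (∑ x ∈ range (m+1), if ¬ (1 + x < τ) then C x else 0) = 2^m - A := by
    rw [hA, eq_sub_iff_add_eq, ← Finset.sum_add_distrib, ← hTot]
    apply Finset.sum_congr rfl; intro x _
    by_cases h : 1 + x < τ <;> simp [h]
  have hnot2 : (∑ x ∈ range (m+1), if ¬ (x < τ) then C x else 0) = 2^m - A' := by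
    rw [hA', eq_sub_iff_add_eq, ← Finset.sum_add_distrib, ← hTot]
    apply Finset.sum_congr rfl; intro x _
    by_cases h : x < τ <;> simp [h]
  rw [hnot1, hnot2]
  set r : ℝ := (chooseZ m ((τ:ℤ)-1) : ℝ) with hr
  have hrC : r = C (τ - 1) := by
    rw [hr, hC]
    unfold chooseZ
    rw [if_pos (by omega)]
    congr 2
    omega
  have hAA' : A' = A + r := by
    rw [hA, hA', hrC]
    have hsplit : ∀ x ∈ range (m+1),
        (if x < τ then C x else 0)
          = (if 1 + x < τ then C x else 0) + (if x = τ - 1 then C x else 0) := by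
      intro x _
      by_cases h1 : 1 + x < τ
      · rw [if_pos (show x < τ by omega), if_pos h1,
          if_neg (show ¬ x = τ - 1 by omega), add_zero]
      · by_cases h2 : x = τ - 1
        · rw [if_pos (show x < τ by omega), if_neg h1, if_pos h2, zero_add]
        · rw [if_neg (show ¬ x < τ by omega), if_neg h1, if_neg h2, add_zero]
    rw [Finset.sum_congr rfl hsplit, Finset.sum_add_distrib]
    congr 1
    rw [Finset.sum_ite_eq' (range (m+1)) (τ-1) C]
    by_cases h : τ - 1 ∈ range (m+1)
    · rw [if_pos h]
    · rw [if_neg h]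
      simp only [Finset.mem_range] at h
      rw [hC]
      simp only []
      rw [Nat.choose_eq_zero_of_lt (by omega)]
      simp
  rw [key τ m hτ1 hτ, ← hA, ← hA', hAA']
  rw [show (4:ℝ)^m = 2^m * 2^m by rw [← mul_pow]; norm_num]
  ring

end Counting

lemma exp_eq (N m : ℕ) (h : 2*m+2 ≤ N) :
    (N-1) + (N-1) + (N-m) + (N-m) = (N-(2*m+2)) + N + N + N := by omega

lemma icc_bound_eq (d τ : ℕ) (hd : 1 ≤ d) :
    ((d:ℤ) - τ + 1) = (((d-1:ℕ):ℤ) + 2 - τ) := by omega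

lemma subexp_eq (N m : ℕ) (h : 2*m+2 ≤ N) : (N - (2*m+2)) + (2*m+2) = N := by omega

theorem stmt2 {V : Type*} [Fintype V] [DecidableEq V]
    (d τ : ℕ) (hd : 1 ≤ d) (hτ : d < 2 * τ)
    (G : SimpleGraph V) [DecidableRel G.Adj]
    (hreg : G.IsRegularOfDegree d) (htf : G.CliqueFree 3)
    (u v : V) (huv : G.Adj u v) :
    ((Finset.univ.filter (fun c : V → Bool =>
        (if ((G.neighborFinset u).filter (fun y => c y = c u)).card < τ then c u else !(c u))
        ≠ (if ((G.neighborFinset v).filter (fun y => c y = c v)).card < τ then c v else !(c v)))).card : ℝ)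
      / 2 ^ (Fintype.card V)
    = 1/2 + (chooseZ (d-1) ((τ : ℤ) - 1) : ℝ) / 4 ^ (d-1)
        * ∑ i ∈ Finset.Icc ((d : ℤ) - τ + 1) ((τ : ℤ) - 1), (chooseZ (d-1) i : ℝ) := by
  classical
  set m := d - 1 with hm
  set U' := (G.neighborFinset u).erase v with hU'def
  set V' := (G.neighborFinset v).erase u with hV'def
  have hvU : v ∈ G.neighborFinset u := by rw [SimpleGraph.mem_neighborFinset]; exact huv
  have huV : u ∈ G.neighborFinset v := by rw [SimpleGraph.mem_neighborFinset]; exact huv.symm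
  have hUcard : U'.card = m := by rw [hU'def, Finset.card_erase_of_mem hvU, SimpleGraph.card_neighborFinset_eq_degree, hreg u]
  have hVcard : V'.card = m := by rw [hV'def, Finset.card_erase_of_mem huV, SimpleGraph.card_neighborFinset_eq_degree, hreg v]
  have hins_u : G.neighborFinset u = insert v U' := (Finset.insert_erase hvU).symm
  have hins_v : G.neighborFinset v = insert u V' := (Finset.insert_erase huV).symm
  have hune : u ≠ v := huv.ne
  have huU : u ∉ U' := by
    intro h
    have h2 := Finset.mem_of_mem_erase h
    rw [SimpleGraph.mem_neighborFinset] at h2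
    exact G.irrefl h2
  have hvV : v ∉ V' := by
    intro h
    have h2 := Finset.mem_of_mem_erase h
    rw [SimpleGraph.mem_neighborFinset] at h2
    exact G.irrefl h2
  have hvUm : v ∉ U' := Finset.notMem_erase v _
  have huVm : u ∉ V' := Finset.notMem_erase u _
  have hdisjUV : Disjoint U' V' := by
    rw [Finset.disjoint_left]
    intro w hw1 hw2
    have h1 : G.Adj u w := by
      have := Finset.mem_of_mem_erase hw1
      rwa [SimpleGraph.mem_neighborFinset] at this
    have h2 : G.Adj v w := by
      have := Finset.mem_of_mem_erase hw2
      rwa [SimpleGraph.mem_neighborFinset] at this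
    exact htf {u, v, w} (SimpleGraph.is3Clique_triple_iff.mpr ⟨huv, h1, h2⟩)
  have hS : 2 * m + 2 ≤ Fintype.card V := by
    have hcard : (insert u (insert v (U' ∪ V'))).card = 2 * m + 2 := by
      rw [Finset.card_insert_of_notMem (by simp [hune, huU, huVm]),
        Finset.card_insert_of_notMem (by simp [hvUm, hvV]),
        Finset.card_union_of_disjoint hdisjUV, hUcard, hVcard]
      ring
    calc 2 * m + 2 = (insert u (insert v (U' ∪ V'))).card := hcard.symm
    _ ≤ Fintype.card V := Finset.card_le_univ _
  have hτ1 : 1 ≤ τ := by omega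
  have hm2 : m + 2 ≤ 2 * τ := by omega
  -- the degree-count rewrite
  have hcardu : ∀ c : V → Bool, ((G.neighborFinset u).filter (fun y => c y = c u)).card
      = (if c v = c u then 1 else 0) + (U'.filter fun z => c z = c u).card := by
    intro c
    rw [hins_u, Finset.filter_insert]
    by_cases h : c v = c u
    · rw [if_pos h, if_pos h,
        Finset.card_insert_of_notMem (fun hmem => hvUm (Finset.mem_of_mem_filter _ hmem)),
        add_comm]
    · rw [if_neg h, if_neg h, zero_add]
  have hcardv : ∀ c : V → Bool, ((G.neighborFinset v).filter (fun y => c y = c v)).card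
      = (if c u = c v then 1 else 0) + (V'.filter fun z => c z = c v).card := by
    intro c
    rw [hins_v, Finset.filter_insert]
    by_cases h : c u = c v
    · rw [if_pos h, if_pos h,
        Finset.card_insert_of_notMem (fun hmem => huVm (Finset.mem_of_mem_filter _ hmem)),
        add_comm]
    · rw [if_neg h, if_neg h, zero_add]
  set Φ : (V → Bool) → Bool × Bool × ℕ × ℕ := fun c =>
    (c u, c v, (U'.filter fun z => c z = c u).card, (V'.filter fun z => c z = c v).card) with hΦ
  set Q : Bool × Bool × ℕ × ℕ → Prop := fun t =>
    (if (if t.2.1 = t.1 then 1 else 0) + t.2.2.1 < τ then t.1 else !t.1)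
      ≠ (if (if t.1 = t.2.1 then 1 else 0) + t.2.2.2 < τ then t.2.1 else !t.2.1) with hQdef
  have hfe : (Finset.univ.filter (fun c : V → Bool =>
        (if ((G.neighborFinset u).filter (fun y => c y = c u)).card < τ then c u else !(c u))
        ≠ (if ((G.neighborFinset v).filter (fun y => c y = c v)).card < τ then c v else !(c v))))
      = Finset.univ.filter (fun c => Q (Φ c)) := by
    apply Finset.filter_congr
    intro c _
    rw [hcardu c, hcardv c]
  rw [hfe]
  set T : Finset (Bool × Bool × ℕ × ℕ) :=
    (univ : Finset Bool) ×ˢ (univ : Finset Bool) ×ˢ range (m+1) ×ˢ range (m+1) with hT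
  have hmem : ∀ c ∈ Finset.univ.filter (fun c => Q (Φ c)), Φ c ∈ T := by
    intro c _
    simp only [hT, hΦ, Finset.mem_product, Finset.mem_univ, Finset.mem_range, true_and]
    constructor
    · exact Nat.lt_succ_of_le (hUcard ▸ Finset.card_le_card (Finset.filter_subset _ _))
    · exact Nat.lt_succ_of_le (hVcard ▸ Finset.card_le_card (Finset.filter_subset _ _))
  have hsum := Finset.card_eq_sum_card_fiberwise hmem
  rw [hsum]
  -- the fiber count
  have hfiber : ∀ (bu bv : Bool) (x y : ℕ),
      (Finset.univ.filter (fun c : V → Bool => Φ c = (bu, bv, x, y))).card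
        = m.choose x * m.choose y * 2 ^ (Fintype.card V - (2*m+2)) := by
    intro bu bv x y
    have hpred : ∀ c : V → Bool, (Φ c = (bu, bv, x, y)) ↔
        (c u = bu ∧ (c v = bv ∧ ((U'.filter fun z => c z = bu).card = x
          ∧ (V'.filter fun z => c z = bv).card = y))) := by
      intro c
      simp only [hΦ, Prod.ext_iff]
      constructor
      · rintro ⟨h1, h2, h3, h4⟩
        subst h1; subst h2
        exact ⟨rfl, rfl, h3, h4⟩
      · rintro ⟨h1, h2, h3, h4⟩
        subst h1; subst h2
        exact ⟨rfl, rfl, h3, h4⟩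
    rw [Finset.filter_congr (fun c _ => hpred c)]
    have dep3a : ∀ c₁ c₂ : V → Bool, (∀ w ∈ U', c₁ w = c₂ w) →
        (((U'.filter fun z => c₁ z = bu).card = x) ↔ ((U'.filter fun z => c₂ z = bu).card = x)) := by
      intro c₁ c₂ h
      rw [Finset.filter_congr (fun w hw => by rw [h w hw])]
    have dep3b : ∀ c₁ c₂ : V → Bool, (∀ w ∈ V', c₁ w = c₂ w) →
        (((V'.filter fun z => c₁ z = bv).card = y) ↔ ((V'.filter fun z => c₂ z = bv).card = y)) := by
      intro c₁ c₂ h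
      rw [Finset.filter_congr (fun w hw => by rw [h w hw])]
    have e3 := indep U' V' hdisjUV
      (fun c => (U'.filter fun z => c z = bu).card = x)
      (fun c => (V'.filter fun z => c z = bv).card = y) dep3a dep3b
    have dep2b : ∀ c₁ c₂ : V → Bool, (∀ w ∈ U' ∪ V', c₁ w = c₂ w) →
        ((((U'.filter fun z => c₁ z = bu).card = x ∧ (V'.filter fun z => c₁ z = bv).card = y))
          ↔ (((U'.filter fun z => c₂ z = bu).card = x ∧ (V'.filter fun z => c₂ z = bv).card = y))) := by
      intro c₁ c₂ h
      rw [dep3a c₁ c₂ (fun w hw => h w (Finset.mem_union_left _ hw)),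
        dep3b c₁ c₂ (fun w hw => h w (Finset.mem_union_right _ hw))]
    have hdisj2 : Disjoint ({v} : Finset V) (U' ∪ V') := by
      simp [Finset.disjoint_left, hvUm, hvV]
    have e2 := indep ({v} : Finset V) (U' ∪ V') hdisj2
      (fun c => c v = bv)
      (fun c => (U'.filter fun z => c z = bu).card = x ∧ (V'.filter fun z => c z = bv).card = y)
      (fun c₁ c₂ h => by show c₁ v = bv ↔ c₂ v = bv; rw [h v (Finset.mem_singleton_self v)]) dep2b
    have hdisj1 : Disjoint ({u} : Finset V) (insert v (U' ∪ V')) := by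
      simp [Finset.disjoint_left, hune, huU, huVm]
    have dep1b : ∀ c₁ c₂ : V → Bool, (∀ w ∈ insert v (U' ∪ V'), c₁ w = c₂ w) →
        ((c₁ v = bv ∧ ((U'.filter fun z => c₁ z = bu).card = x ∧ (V'.filter fun z => c₁ z = bv).card = y))
          ↔ (c₂ v = bv ∧ ((U'.filter fun z => c₂ z = bu).card = x ∧ (V'.filter fun z => c₂ z = bv).card = y))) := by
      intro c₁ c₂ h
      rw [h v (Finset.mem_insert_self v _),
        dep2b c₁ c₂ (fun w hw => h w (Finset.mem_insert_of_mem hw))]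
    have e1 := indep ({u} : Finset V) (insert v (U' ∪ V')) hdisj1
      (fun c => c u = bu)
      (fun c => c v = bv ∧ ((U'.filter fun z => c z = bu).card = x
        ∧ (V'.filter fun z => c z = bv).card = y))
      (fun c₁ c₂ h => by show c₁ u = bu ↔ c₂ u = bu; rw [h u (Finset.mem_singleton_self u)]) dep1b
    have hAu := count_point u bu
    have hBv := count_point v bv
    have hCu := count_ball U' bu x
    have hCv := count_ball V' bv y
    rw [hUcard] at hCu
    rw [hVcard] at hCv
    set N := Fintype.card V with hN
    have hkey : (Finset.univ.filter (fun c : V → Bool => c u = bu ∧ (c v = bv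
        ∧ ((U'.filter fun z => c z = bu).card = x ∧ (V'.filter fun z => c z = bv).card = y)))).card
        * (2^N * 2^N * 2^N)
        = (m.choose x * m.choose y * 2 ^ (N - (2*m+2))) * (2^N * 2^N * 2^N) := by
      calc (Finset.univ.filter (fun c : V → Bool => c u = bu ∧ (c v = bv
            ∧ ((U'.filter fun z => c z = bu).card = x
              ∧ (V'.filter fun z => c z = bv).card = y)))).card * (2^N * 2^N * 2^N)
          = ((Finset.univ.filter (fun c : V → Bool => c u = bu ∧ (c v = bv
            ∧ ((U'.filter fun z => c z = bu).card = x
              ∧ (V'.filter fun z => c z = bv).card = y)))).card * 2^N) * 2^N * 2^N := by ring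
        _ = ((Finset.univ.filter (fun c : V → Bool => c u = bu)).card
            * (Finset.univ.filter (fun c : V → Bool => c v = bv
              ∧ ((U'.filter fun z => c z = bu).card = x
                ∧ (V'.filter fun z => c z = bv).card = y))).card) * 2^N * 2^N := by rw [e1]
        _ = (Finset.univ.filter (fun c : V → Bool => c u = bu)).card
            * (((Finset.univ.filter (fun c : V → Bool => c v = bv
              ∧ ((U'.filter fun z => c z = bu).card = x
                ∧ (V'.filter fun z => c z = bv).card = y))).card * 2^N) * 2^N) := by ring
        _ = (Finset.univ.filter (fun c : V → Bool => c u = bu)).card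
            * (((Finset.univ.filter (fun c : V → Bool => c v = bv)).card
              * (Finset.univ.filter (fun c : V → Bool =>
                (U'.filter fun z => c z = bu).card = x
                  ∧ (V'.filter fun z => c z = bv).card = y)).card) * 2^N) := by rw [e2]
        _ = (Finset.univ.filter (fun c : V → Bool => c u = bu)).card
            * ((Finset.univ.filter (fun c : V → Bool => c v = bv)).card
              * ((Finset.univ.filter (fun c : V → Bool =>
                (U'.filter fun z => c z = bu).card = x
                  ∧ (V'.filter fun z => c z = bv).card = y)).card * 2^N)) := by ring
        _ = (Finset.univ.filter (fun c : V → Bool => c u = bu)).card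
            * ((Finset.univ.filter (fun c : V → Bool => c v = bv)).card
              * ((Finset.univ.filter (fun c : V → Bool =>
                  (U'.filter fun z => c z = bu).card = x)).card
                * (Finset.univ.filter (fun c : V → Bool =>
                  (V'.filter fun z => c z = bv).card = y)).card)) := by rw [e3]
        _ = 2^(N-1) * (2^(N-1) * ((m.choose x * 2^(N-m)) * (m.choose y * 2^(N-m)))) := by
              rw [hAu, hBv, hCu, hCv]
        _ = (m.choose x * m.choose y) * (2^(N-1) * 2^(N-1) * 2^(N-m) * 2^(N-m)) := by ring
        _ = (m.choose x * m.choose y) * (2^(N-(2*m+2)) * 2^N * 2^N * 2^N) := by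
              have hpw : (2:ℕ)^(N-1) * 2^(N-1) * 2^(N-m) * 2^(N-m)
                  = 2^(N-(2*m+2)) * 2^N * 2^N * 2^N := by
                rw [← pow_add, ← pow_add, ← pow_add, exp_eq N m hS, pow_add, pow_add, pow_add]
              rw [hpw]
        _ = (m.choose x * m.choose y * 2 ^ (N - (2*m+2))) * (2^N * 2^N * 2^N) := by ring
    exact Nat.eq_of_mul_eq_mul_right (by positivity) hkey
  -- evaluate each fiber term
  have hterm : ∀ t ∈ T, (((Finset.univ.filter (fun c => Q (Φ c))).filter (fun c => Φ c = t)).card : ℝ)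
      = if Q t then (m.choose t.2.2.1 : ℝ) * (m.choose t.2.2.2)
          * 2 ^ (Fintype.card V - (2*m+2)) else 0 := by
    intro t _
    obtain ⟨bu, bv, x, y⟩ := t
    by_cases hQt : Q (bu, bv, x, y)
    · rw [if_pos hQt]
      have heq : (Finset.univ.filter (fun c => Q (Φ c))).filter (fun c => Φ c = (bu, bv, x, y))
          = Finset.univ.filter (fun c : V → Bool => Φ c = (bu, bv, x, y)) := by
        rw [Finset.filter_filter]
        apply Finset.filter_congr
        intro c _
        constructor
        · exact And.right
        · intro h; exact ⟨h ▸ hQt, h⟩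
      rw [heq, hfiber bu bv x y]
      push_cast
      ring
    · rw [if_neg hQt]
      rw [Finset.filter_filter]
      norm_cast
      rw [Finset.card_eq_zero, Finset.filter_eq_empty_iff]
      rintro c - ⟨h1, h2⟩
      exact hQt (h2 ▸ h1)
  push_cast
  rw [Finset.sum_congr rfl hterm]
  -- pull out the power of two
  have hpull : ∀ t ∈ T, (if Q t then (m.choose t.2.2.1 : ℝ) * (m.choose t.2.2.2)
        * 2 ^ (Fintype.card V - (2*m+2)) else 0)
      = 2 ^ (Fintype.card V - (2*m+2))
        * (if Q t then (m.choose t.2.2.1 : ℝ) * (m.choose t.2.2.2) else 0) := by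
    intro t _
    by_cases hQt : Q t
    · rw [if_pos hQt, if_pos hQt]; ring
    · rw [if_neg hQt, if_neg hQt]; ring
  rw [Finset.sum_congr rfl hpull, ← Finset.mul_sum]
  have hsplit : ∑ t ∈ T, (if Q t then (m.choose t.2.2.1 : ℝ) * (m.choose t.2.2.2) else 0)
      = 2 * 4^m + 4 * (chooseZ m ((τ:ℤ)-1) : ℝ)
        * ∑ i ∈ Finset.Icc ((m:ℤ)+2-τ) ((τ:ℤ)-1), (chooseZ m i : ℝ) := by
    rw [hT, Finset.sum_product, ← arith τ m hτ1 hm2]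
    apply Finset.sum_congr rfl
    intro bu _
    rw [Finset.sum_product]
    apply Finset.sum_congr rfl
    intro bv _
    rw [Finset.sum_product]
  rw [hsplit]
  have hIcc : ((d:ℤ) - τ + 1) = ((m:ℤ) + 2 - τ) := by
    rw [hm]; exact icc_bound_eq d τ hd
  rw [hIcc]
  have h2N : ((2:ℝ)^(Fintype.card V)) ≠ 0 := by positivity
  have h4m : ((4:ℝ)^m) ≠ 0 := by positivity
  have hpow2 : (2:ℝ) ^ (Fintype.card V - (2*m+2)) * (4 * 4^m) = 2 ^ (Fintype.card V) := by
    have : (4:ℝ) * 4^m = 2^(2*m+2) := by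
      rw [show 2*m+2 = 2*(m+1) by ring, pow_mul]
      norm_num
      rw [pow_succ]
      ring
    rw [this, ← pow_add, subexp_eq _ _ hS]
  rw [div_eq_iff h2N, ← hpow2]
  field_simp
  ring
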